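/- Let k be a field of characteristic zero, R = k[x,y], and d = y^m ∂_x + (1 - x^α y) ∂_y with integers m ≥ 2 and α ≥ 1. Then 1 is not in the image d(R); in particular d(R) contains no unit of R. -/

import Mathlib

open Polynomial

namespace Stmt1Aux

def vU (μ β : ℕ) : ℕ → ℕ → ℚ
  | a, b =>
    if _h : a < β + 1 then (if a = β ∧ b = μ + 4 then 1 else 0)
    else (if b = μ + 3 then 0 else vU μ β (a - (β + 1)) (b - 1)) +
      ((a - (β + 1) : ℕ) : ℚ) / (b : ℚ) * vU μ β (a - (β + 2)) (b + μ + 2)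
  termination_by a b => a
  decreasing_by all_goals omega

lemma vU_free (μ β a b : ℕ) (h : a < β + 1) :
    vU μ β a b = if a = β ∧ b = μ + 4 then 1 else 0 := by
  rw [vU, dif_pos h]

lemma vU_rec (μ β a b : ℕ) (h : β + 1 ≤ a) :
    vU μ β a b = (if b = μ + 3 then 0 else vU μ β (a - (β + 1)) (b - 1)) +
      ((a - (β + 1) : ℕ) : ℚ) / (b : ℚ) * vU μ β (a - (β + 2)) (b + μ + 2) := by
  rw [vU, dif_neg (by omega)]

lemma vU_nonneg (μ β : ℕ) : ∀ a b, 0 ≤ vU μ β a b := by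
  intro a
  induction a using Nat.strong_induction_on with
  | _ a ih =>
    intro b
    by_cases h : a < β + 1
    · rw [vU_free μ β a b h]
      split <;> norm_num
    · rw [vU_rec μ β a b (by omega)]
      have h1 : 0 ≤ vU μ β (a - (β + 1)) (b - 1) := ih _ (by omega) _
      have h2 : 0 ≤ vU μ β (a - (β + 2)) (b + μ + 2) := ih _ (by omega) _
      have h3 : (0:ℚ) ≤ ((a - (β + 1) : ℕ) : ℚ) / (b : ℚ) := by positivity
      have h4 : (0:ℚ) ≤ (if b = μ + 3 then 0 else vU μ β (a - (β + 1)) (b - 1)) := by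
        split <;> simp [h1]
      nlinarith [mul_nonneg h3 h2]

def vL (μ β : ℕ) : ℕ → ℕ → ℚ
  | 0, _ => 0
  | (j+1), a => vL μ β j (a + (β + 1)) -
      (a : ℚ) / ((μ + 2 - j : ℕ) : ℚ) * vU μ β (a - 1) (2 * μ + 4 - j)

lemma vL_nonpos (μ β : ℕ) : ∀ j a, vL μ β j a ≤ 0 := by
  intro j
  induction j with
  | zero => intro a; simp [vL]
  | succ j ih =>
    intro a
    have h1 : (0:ℚ) ≤ (a : ℚ) / ((μ + 2 - j : ℕ) : ℚ) * vU μ β (a - 1) (2 * μ + 4 - j) := by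
      have := vU_nonneg μ β (a-1) (2*μ+4-j)
      positivity
    have := ih (a + (β + 1))
    simp only [vL]
    linarith

def vv (μ β a b : ℕ) : ℚ := if μ + 2 < b then vU μ β a b else vL μ β (μ + 2 - b) a

lemma vv_row_m (μ β a : ℕ) : vv μ β a (μ + 2) = 0 := by
  simp [vv, vL]

lemma vv_neg (μ β : ℕ) : vv μ β 0 0 < 0 := by
  have h1 : vv μ β 0 0 = vL μ β (μ + 2) 0 := by simp [vv]
  have h2 : vL μ β (μ + 2) 0 = vL μ β (μ + 1) (0 + (β + 1)) := by
    simp [vL]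
  have h3 : vL μ β (μ + 1) (0 + (β + 1)) =
      vL μ β μ (0 + (β + 1) + (β + 1)) - ((0 + (β + 1) : ℕ) : ℚ) / ((μ + 2 - μ : ℕ) : ℚ) *
        vU μ β (0 + (β + 1) - 1) (2 * μ + 4 - μ) := by
    simp only [vL]
  have h4 : vU μ β (0 + (β + 1) - 1) (2 * μ + 4 - μ) = 1 := by
    have e1 : 0 + (β + 1) - 1 = β := by omega
    have e2 : 2 * μ + 4 - μ = μ + 4 := by omega
    rw [e1, e2, vU_free μ β β (μ+4) (by omega)]
    simp
  have h5 : ((μ + 2 - μ : ℕ) : ℚ) = 2 := by norm_num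
  have h6 := vL_nonpos μ β μ (0 + (β + 1) + (β + 1))
  rw [h1, h2, h3, h4, h5]
  have : (0:ℚ) < ((0 + (β + 1) : ℕ) : ℚ) / 2 := by positivity
  linarith

lemma key (μ β a b : ℕ) :
    ((b : ℚ) + 1) * vv μ β (a + (β + 1)) (b + 1) =
      ((b : ℚ) + 1) * vv μ β a b + (a : ℚ) * vv μ β (a - 1) (b + 1 + (μ + 2)) := by
  have hb1 : ((b:ℚ) + 1) ≠ 0 := by positivity
  have hzW : vv μ β (a - 1) (b + 1 + (μ + 2)) = vU μ β (a - 1) (b + 1 + (μ + 2)) := by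
    simp only [vv, if_pos (by omega : μ + 2 < b + 1 + (μ + 2))]
  by_cases hb : μ + 2 ≤ b
  · have hz1 : vv μ β (a + (β + 1)) (b + 1) = vU μ β (a + (β + 1)) (b + 1) := by
      simp only [vv, if_pos (by omega : μ + 2 < b + 1)]
    rw [hz1, hzW, vU_rec μ β (a + (β + 1)) (b + 1) (by omega),
      (by omega : a + (β + 1) - (β + 1) = a), (by omega : a + (β + 1) - (β + 2) = a - 1),
      (by omega : b + 1 - 1 = b), (by omega : b + 1 + μ + 2 = b + 1 + (μ + 2))]
    rcases eq_or_lt_of_le hb with he | hlt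
    · rw [if_pos (by omega : b + 1 = μ + 3), ← he, vv_row_m]
      push_cast
      field_simp
    · rw [if_neg (by omega : ¬ b + 1 = μ + 3)]
      have hz2 : vv μ β a b = vU μ β a b := by
        simp only [vv, if_pos (by omega : μ + 2 < b)]
      rw [hz2]
      have hc : ((b + 1 : ℕ) : ℚ) = (b:ℚ) + 1 := by push_cast; ring
      rw [hc]
      field_simp
  · have hz1 : vv μ β (a + (β + 1)) (b + 1) = vL μ β (μ + 1 - b) (a + (β + 1)) := by
      simp only [vv, if_neg (by omega : ¬ μ + 2 < b + 1)]
      rw [(by omega : μ + 2 - (b + 1) = μ + 1 - b)]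
    have hz2 : vv μ β a b = vL μ β ((μ + 1 - b) + 1) a := by
      simp only [vv, if_neg (by omega : ¬ μ + 2 < b)]
      rw [(by omega : μ + 2 - b = (μ + 1 - b) + 1)]
    rw [hz1, hz2, hzW]
    simp only [vL]
    rw [(by omega : μ + 2 - (μ + 1 - b) = b + 1), (by omega : 2 * μ + 4 - (μ + 1 - b) = b + 1 + (μ + 2))]
    have hc : ((b + 1 : ℕ) : ℚ) = (b:ℚ) + 1 := by push_cast; ring
    rw [hc]
    field_simp
    ring

noncomputable def ell (k : Type*) [Field k] (μ β : ℕ) :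
    Polynomial (Polynomial k) →+ k :=
  AddMonoidHom.mk' (fun g => g.sum fun b p => p.sum fun a c => ((vv μ β a b : ℚ) : k) * c) (by
    intro p q
    rw [Polynomial.sum_add_index]
    · intro i; exact Polynomial.sum_zero_index _
    · intro b p₁ p₂
      rw [Polynomial.sum_add_index]
      · intro i; exact mul_zero _
      · intro a c₁ c₂; rw [mul_add])

lemma ell_monomial (k : Type*) [Field k] (μ β a b : ℕ) (c : k) :
    ell k μ β (monomial b (monomial a c)) = ((vv μ β a b : ℚ) : k) * c := by
  show ((monomial b) ((monomial a) c)).sum (fun b p => p.sum fun a c => ((vv μ β a b : ℚ) : k) * c) = _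
  rw [Polynomial.sum_monomial_index]
  · rw [Polynomial.sum_monomial_index]
    exact mul_zero _
  · exact Polynomial.sum_zero_index _

lemma mono_eq (k : Type*) [Field k] (A B : ℕ) (c : k) :
    (algebraMap k (Polynomial (Polynomial k)) c) * ((C X) ^ A * X ^ B)
      = monomial B (monomial A c) := by
  rw [Polynomial.algebraMap_apply, Polynomial.algebraMap_eq, ← mul_assoc, ← map_pow,
    ← map_mul, C_mul_X_pow_eq_monomial, C_mul_X_pow_eq_monomial]

lemma ell_term (k : Type*) [Field k] (μ β A B : ℕ) (c : k) :
    ell k μ β ((algebraMap k (Polynomial (Polynomial k)) c) * ((C X) ^ A * X ^ B))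
      = ((vv μ β A B : ℚ) : k) * c := by
  rw [mono_eq, ell_monomial]

lemma ell_d (k : Type*) [Field k] [CharZero k] (μ β : ℕ)
    (d : Derivation k (Polynomial (Polynomial k)) (Polynomial (Polynomial k)))
    (hdx : d (C X) = X ^ (μ + 2))
    (hdy : d X = 1 - (C X) ^ (β + 1) * X) :
    ∀ g, ell k μ β (d g) = 0 := by
  intro g
  induction g using Polynomial.induction_on' with
  | add p q hp hq => rw [map_add, map_add, hp, hq, add_zero]
  | monomial b p =>
    induction p using Polynomial.induction_on' with
    | add p q hp hq => rw [map_add, map_add, map_add, hp, hq, add_zero]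
    | monomial a c =>
      rw [← mono_eq]
      cases b with
      | zero =>
        have hD : d ((algebraMap k (Polynomial (Polynomial k)) c) * ((C X) ^ a * X ^ 0)) =
            a • ((algebraMap k (Polynomial (Polynomial k)) c) * ((C X) ^ (a-1) * X ^ (μ + 2))) := by
          rw [pow_zero, mul_one, Derivation.leibniz, Derivation.map_algebraMap, smul_zero,
            add_zero, Derivation.leibniz_pow, hdx]
          simp only [smul_eq_mul, nsmul_eq_mul]
          push_cast
          ring
        rw [hD, map_nsmul, ell_term, vv_row_m]
        simp
      | succ s =>
        have hD : d ((algebraMap k (Polynomial (Polynomial k)) c) * ((C X) ^ a * X ^ (s+1))) =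
            (s+1) • ((algebraMap k (Polynomial (Polynomial k)) c) * ((C X) ^ a * X ^ s))
            - (s+1) • ((algebraMap k (Polynomial (Polynomial k)) c) * ((C X) ^ (a + (β+1)) * X ^ (s+1)))
            + a • ((algebraMap k (Polynomial (Polynomial k)) c) * ((C X) ^ (a-1) * X ^ (s+1+(μ+2)))) := by
          rw [Derivation.leibniz, Derivation.map_algebraMap, smul_zero, add_zero,
            Derivation.leibniz, Derivation.leibniz_pow, Derivation.leibniz_pow, hdx, hdy]
          simp only [smul_eq_mul, nsmul_eq_mul, Nat.add_sub_cancel, pow_add]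
          push_cast
          ring
        rw [hD, map_add, map_sub, map_nsmul, map_nsmul, map_nsmul, ell_term, ell_term, ell_term]
        have hk := key μ β a s
        have hz : (((s:ℚ) + 1) * vv μ β a s - ((s:ℚ)+1) * vv μ β (a + (β+1)) (s+1)
            + (a:ℚ) * vv μ β (a-1) (s+1+(μ+2))) = 0 := by linarith
        have : ((s+1) • (((vv μ β a s : ℚ) : k) * c) - (s+1) • (((vv μ β (a + (β+1)) (s+1) : ℚ) : k) * c)
            + a • (((vv μ β (a-1) (s+1+(μ+2)) : ℚ) : k) * c))
            = (((((s:ℚ) + 1) * vv μ β a s - ((s:ℚ)+1) * vv μ β (a + (β+1)) (s+1)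
            + (a:ℚ) * vv μ β (a-1) (s+1+(μ+2))) : ℚ) : k) * c := by
          push_cast
          ring
        rw [this, hz]
        simp

end Stmt1Aux

/-- with `R = k[x,y]` and `d = y^m ∂x + (1 - x^α y) ∂y`
(`m ≥ 2`, `α ≥ 1`), `1` is not in the image of `d`; in particular the image
of `d` contains no unit of `R`. -/

theorem stmt1 (k : Type*) [Field k] [CharZero k] (m α : ℕ) (hm : 2 ≤ m) (hα : 1 ≤ α)
    (d : Derivation k (Polynomial (Polynomial k)) (Polynomial (Polynomial k)))
    (hdx : d (C X) = X ^ m)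
    (hdy : d X = 1 - (C X) ^ α * X) :
    (∀ r : Polynomial (Polynomial k), d r ≠ 1) ∧
    (∀ r : Polynomial (Polynomial k), ¬ IsUnit (d r)) := by
  obtain ⟨μ, rfl⟩ : ∃ μ, m = μ + 2 := ⟨m - 2, by omega⟩
  obtain ⟨β, rfl⟩ : ∃ β, α = β + 1 := ⟨α - 1, by omega⟩
  have H1 : ∀ r : Polynomial (Polynomial k), d r ≠ 1 := by
    intro r hr
    have h0 := Stmt1Aux.ell_d k μ β d hdx hdy r
    rw [hr] at h0
    have e : (1 : Polynomial (Polynomial k)) = monomial 0 (monomial 0 (1:k)) := by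
      simp [Polynomial.monomial_zero_left]
    rw [e, Stmt1Aux.ell_monomial, mul_one] at h0
    have := Stmt1Aux.vv_neg μ β
    rw [Rat.cast_eq_zero] at h0
    linarith
  refine ⟨H1, ?_⟩
  intro r hu
  rcases Polynomial.isUnit_iff.mp hu with ⟨p, hpu, hp⟩
  rcases Polynomial.isUnit_iff.mp hpu with ⟨u, huu, hup⟩
  have hune : u ≠ 0 := huu.ne_zero
  apply H1 (u⁻¹ • r)
  rw [Derivation.map_smul, ← hp, ← hup, Polynomial.smul_C, Polynomial.smul_C,
    smul_eq_mul, inv_mul_cancel₀ hune, map_one, map_one]
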